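/- A subset L ⊆ H is a maximal commutative subfield of H (i.e., L is a commutative subring of H containing F·1 in which every nonzero element is invertible with inverse in L, and no commutative subfield of H properly contains L) if and only if L is a 2-dimensional F-subspace of H containing 1; in other words, the lines of 𝒜 are precisely the maximal subfields of H. -/
import Mathlib


variable (F H : Type*) [Field F] [DivisionRing H] [Algebra F H]

/-- A *line* of the projective space `ℙ(H_F)`: a 2-dimensional `F`-subspace of `H`. -/
abbrev Line := {M : Submodule F H // Module.finrank F M = 2}

/-- `M ∥ℓ N` : there is `g ≠ 0` with `N = g·M`. -/
def LeftPar (M N : Submodule F H) : Prop :=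
  ∃ g : H, g ≠ 0 ∧ (N : Set H) = (fun m => g * m) '' (M : Set H)

/-- `M ∥r N` : there is `g ≠ 0` with `N = M·g`. -/
def RightPar (M N : Submodule F H) : Prop :=
  ∃ g : H, g ≠ 0 ∧ (N : Set H) = (fun m => m * g) '' (M : Set H)

/-- The left parallel class `Sℓ(M) = {N | N ∥ℓ M}`. -/
def leftClass (M : Line F H) : Set (Line F H) := {N | LeftPar F H N.1 M.1}

/-- The right parallel class `Sr(M) = {N | N ∥r M}`. -/
def rightClass (M : Line F H) : Set (Line F H) := {N | RightPar F H N.1 M.1}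

/-- The `∥`-class `S(M) = {N | N ∥ M}`. -/
def parClass (par : Line F H → Line F H → Prop) (M : Line F H) : Set (Line F H) :=
  {N | par N M}

/-- A parallelism: an equivalence relation on lines such that for every `x ≠ 0`
and every line `M` there is exactly one line `N` with `x ∈ N` and `N ∥ M`. -/
def IsParallelism (par : Line F H → Line F H → Prop) : Prop :=
  Equivalence par ∧
    ∀ x : H, x ≠ 0 → ∀ M : Line F H, ∃! N : Line F H, x ∈ N.1 ∧ par N M

/-- A Clifford-like parallelism: every `∥`-class is a left or a right parallel class. -/
def IsCliffordLike (par : Line F H → Line F H → Prop) : Prop :=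
  IsParallelism F H par ∧
    ∀ M : Line F H,
      parClass F H par M = leftClass F H M ∨ parClass F H par M = rightClass F H M

/-- The star `𝒜` of lines through `F·1`, i.e. the lines containing `1`. -/
def starLines : Set (Line F H) := {L | (1 : H) ∈ L.1}

/-- The set `ℱ` of lines of `𝒜` whose `∥`-class is a left parallel class. -/
def calF (par : Line F H → Line F H → Prop) : Set (Line F H) :=
  {L | (1 : H) ∈ L.1 ∧ parClass F H par L = leftClass F H L}

/-- A semilinear bijection of `H` (over some field automorphism of `F`). -/
def IsSemilinear (β : H → H) : Prop :=
  Function.Bijective β ∧ (∀ x y : H, β (x + y) = β x + β y) ∧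
    ∃ σ : F ≃+* F, ∀ (a : F) (x : H), β (a • x) = σ a • β x

/-- `β` preserves the parallelism `par`: for all lines `M, N`,
`M ∥ N ↔ β(M) ∥ β(N)`, where `β(M)` denotes the line whose carrier is `β '' M`. -/
def Preserves (β : H → H) (par : Line F H → Line F H → Prop) : Prop :=
  ∀ M N M' N' : Line F H,
    (M'.1 : Set H) = β '' (M.1 : Set H) →
    (N'.1 : Set H) = β '' (N.1 : Set H) →
    (par M N ↔ par M' N')

/-- The image `β(𝒢)` of a set of lines under `β`. -/
def imageLines (β : H → H) (G : Set (Line F H)) : Set (Line F H) :=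
  {L' | ∃ L ∈ G, (L'.1 : Set H) = β '' (L.1 : Set H)}

/-- The centre of `H` is exactly `F·1`. -/
def CenterEqF : Prop :=
  ∀ z : H, (∀ x : H, z * x = x * z) ↔ ∃ a : F, z = algebraMap F H a

/-- Ring automorphism of `H`, as a plain function. -/
def IsRingAutFn (α : H → H) : Prop :=
  Function.Bijective α ∧ (∀ x y : H, α (x + y) = α x + α y) ∧ α 1 = 1 ∧
    ∀ x y : H, α (x * y) = α x * α y

/-- Ring antiautomorphism of `H`, as a plain function. -/
def IsRingAntiAutFn (α : H → H) : Prop :=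
  Function.Bijective α ∧ (∀ x y : H, α (x + y) = α x + α y) ∧ α 1 = 1 ∧
    ∀ x y : H, α (x * y) = α y * α x

/-- `L` is a commutative subfield of `H`: a commutative subring containing `F·1`
in which every nonzero element has its inverse in `L`. -/
def IsCommSubfield (L : Set H) : Prop :=
  (∀ a : F, algebraMap F H a ∈ L) ∧
  (∀ x ∈ L, ∀ y ∈ L, x + y ∈ L) ∧
  (∀ x ∈ L, -x ∈ L) ∧
  (∀ x ∈ L, ∀ y ∈ L, x * y ∈ L) ∧
  (∀ x ∈ L, ∀ y ∈ L, x * y = y * x) ∧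
  (∀ x ∈ L, x ≠ 0 → x⁻¹ ∈ L)


section Aux

variable {F H}

private lemma qsf_indep_pair {x : H} (hx : ¬ ∃ a : F, x = algebraMap F H a) :
    LinearIndependent F ![(1 : H), x] := by
  rw [LinearIndependent.pair_iff]
  intro s t hst
  by_cases ht : t = 0
  · subst ht
    simp only [zero_smul, add_zero, smul_eq_zero] at hst
    rcases hst with h | h
    · exact ⟨h, rfl⟩
    · simp at h
  · exfalso
    apply hx
    refine ⟨-(t⁻¹ * s), ?_⟩
    have h2 : t • x = -(s • (1:H)) := by linear_combination (norm := module) hst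
    have : x = (-(t⁻¹ * s)) • (1 : H) := by
      have := congrArg (fun y => t⁻¹ • y) h2
      simp only [smul_smul, inv_mul_cancel₀ ht, one_smul, smul_neg] at this
      rw [this]; module
    rw [this, Algebra.algebraMap_eq_smul_one]

private lemma qsf_finrank_span_pair {x : H} (hx : ¬ ∃ a : F, x = algebraMap F H a) :
    Module.finrank F (Submodule.span F ({1, x} : Set H)) = 2 := by
  have h := qsf_indep_pair hx
  have : ({1, x} : Set H) = Set.range ![(1:H), x] := by
    simp [Matrix.range_cons, Matrix.range_empty, Set.insert_comm]
    ext y; simp [or_comm]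
  rw [this, finrank_span_eq_card h]
  simp

private lemma qsf_centralizer_carrier (hcenter : CenterEqF F H)
    (hdim : Module.finrank F H = 4)
    {x : H} (hx : ¬ ∃ a : F, x = algebraMap F H a) :
    Subalgebra.toSubmodule (Subalgebra.centralizer F ({x} : Set H))
      = Submodule.span F ({1, x} : Set H) := by
  have hspan2 := qsf_finrank_span_pair hx
  haveI : FiniteDimensional F H := FiniteDimensional.of_finrank_pos (by omega)
  set D := Subalgebra.centralizer F ({x} : Set H) with hD
  have hxD : x ∈ D := by
    rw [Subalgebra.mem_centralizer_iff]; intro g hg; rw [Set.mem_singleton_iff] at hg; rw [hg]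
  have h1D : (1 : H) ∈ D := one_mem D
  have hle : Submodule.span F ({1, x} : Set H) ≤ Subalgebra.toSubmodule D := by
    rw [Submodule.span_le]
    rintro y (rfl | rfl) <;> assumption
  haveI : Nontrivial D := ⟨⟨1, h1D⟩, ⟨0, zero_mem D⟩, by
    intro h; exact one_ne_zero (congrArg Subtype.val h)⟩
  letI : DivisionRing D := DivisionRing.ofIsUnitOrEqZero (by
    intro a
    by_cases ha : (a : H) = 0
    · right; exact Subtype.ext ha
    · left
      have hinv : (a : H)⁻¹ ∈ D := by
        rw [Subalgebra.mem_centralizer_iff]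
        intro g hg; rw [Set.mem_singleton_iff] at hg; rw [hg]
        have hcomm : x * (a : H) = (a : H) * x :=
          (Subalgebra.mem_centralizer_iff F).mp a.2 x rfl
        have h := congrArg (fun y => (a : H)⁻¹ * y * (a : H)⁻¹) hcomm
        simp only [mul_assoc, mul_inv_cancel₀ ha, mul_one, inv_mul_cancel_left₀ ha] at h
        exact h.symm
      exact ⟨⟨a, ⟨(a : H)⁻¹, hinv⟩, Subtype.ext (mul_inv_cancel₀ ha),
        Subtype.ext (inv_mul_cancel₀ ha)⟩, rfl⟩)
  have tower : Module.finrank F D * Module.finrank D H = Module.finrank F H :=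
    Module.finrank_mul_finrank F D H
  have hge : 2 ≤ Module.finrank F D := by
    have := Submodule.finrank_mono (t := Subalgebra.toSubmodule D) hle
    rw [hspan2] at this
    exact this
  have hne4 : Module.finrank F D ≠ 4 := by
    intro h4
    have htop : Subalgebra.toSubmodule D = ⊤ := Submodule.eq_top_of_finrank_eq
      (by rw [(Subalgebra.finrank_toSubmodule D :
        Module.finrank F (Subalgebra.toSubmodule D) = Module.finrank F D), h4, hdim])
    have hcent : ∀ y : H, x * y = y * x := by
      intro y
      have : y ∈ Subalgebra.toSubmodule D := htop ▸ Submodule.mem_top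
      exact (Subalgebra.mem_centralizer_iff F).mp this x rfl
    exact hx ((hcenter x).mp hcent)
  have hd2 : Module.finrank F D = 2 := by
    rw [hdim] at tower
    obtain ⟨c, hc⟩ : Module.finrank F D ∣ 4 := ⟨_, tower.symm⟩
    have hb : Module.finrank F D ≤ 4 := Nat.le_of_dvd four_pos ⟨c, hc⟩
    have h234 : Module.finrank F D = 2 ∨ Module.finrank F D = 3 ∨ Module.finrank F D = 4 := by
      omega
    rcases h234 with h | h | h
    · exact h
    · rw [h] at hc; omega
    · exact absurd h hne4
  exact (Submodule.eq_of_le_of_finrank_eq hle (by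
    rw [hspan2, (Subalgebra.finrank_toSubmodule D :
      Module.finrank F (Subalgebra.toSubmodule D) = Module.finrank F D)]
    exact hd2.symm)).symm

private lemma qsf_span_comm {x : H} {y z : H} (hy : y ∈ Submodule.span F ({1, x} : Set H))
    (hz : z ∈ Submodule.span F ({1, x} : Set H)) : y * z = z * y := by
  rw [Submodule.mem_span_pair] at hy hz
  obtain ⟨a, b, rfl⟩ := hy
  obtain ⟨c, d, rfl⟩ := hz
  simp only [add_mul, mul_add, smul_mul_assoc, mul_smul_comm, smul_smul, one_mul, mul_one]
  module

private lemma qsf_span_isCommSubfield (hcenter : CenterEqF F H)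
    (hdim : Module.finrank F H = 4)
    {x : H} (hx : ¬ ∃ a : F, x = algebraMap F H a) :
    IsCommSubfield F H (Submodule.span F ({1, x} : Set H) : Set H) ∧
    ∀ L' : Set H, IsCommSubfield F H L' →
      (Submodule.span F ({1, x} : Set H) : Set H) ⊆ L' →
      L' = (Submodule.span F ({1, x} : Set H) : Set H) := by
  have hcent := qsf_centralizer_carrier hcenter hdim hx
  have hmemc : ∀ y : H, y ∈ Submodule.span F ({1, x} : Set H) ↔
      y ∈ Subalgebra.centralizer F ({x} : Set H) := by
    intro y
    rw [← hcent]
    rfl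
  have h1 : (1 : H) ∈ Submodule.span F ({1, x} : Set H) :=
    Submodule.subset_span (by simp)
  have hxmem : x ∈ Submodule.span F ({1, x} : Set H) :=
    Submodule.subset_span (by simp)
  constructor
  · refine ⟨?_, ?_, ?_, ?_, ?_, ?_⟩
    · intro a
      rw [Algebra.algebraMap_eq_smul_one]
      exact Submodule.smul_mem _ a h1
    · intro y hy z hz; exact Submodule.add_mem _ hy hz
    · intro y hy; exact Submodule.neg_mem _ hy
    · intro y hy z hz
      rw [SetLike.mem_coe, hmemc] at *
      exact mul_mem hy hz
    · intro y hy z hz; exact qsf_span_comm hy hz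
    · intro y hy hy0
      rw [SetLike.mem_coe, hmemc] at *
      rw [Subalgebra.mem_centralizer_iff] at *
      intro g hg; rw [Set.mem_singleton_iff] at hg; rw [hg]
      have hcomm : Commute x y := hy x rfl
      exact hcomm.inv_right₀
  · intro L' hL' hsub
    have hxL' : x ∈ L' := hsub hxmem
    apply Set.Subset.antisymm _ hsub
    intro z hz
    rw [SetLike.mem_coe, hmemc, Subalgebra.mem_centralizer_iff]
    intro g hg; rw [Set.mem_singleton_iff] at hg; rw [hg]
    exact hL'.2.2.2.2.1 x hxL' z hz

private lemma qsf_exists_not_range (hdim : Module.finrank F H = 4) :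
    ∃ x : H, ¬ ∃ a : F, x = algebraMap F H a := by
  by_contra hall
  push_neg at hall
  have hsurj : Function.Surjective (Algebra.linearMap F H) := by
    intro y
    obtain ⟨a, ha⟩ := hall y
    exact ⟨a, ha.symm⟩
  have htop : LinearMap.range (Algebra.linearMap F H) = ⊤ :=
    LinearMap.range_eq_top.mpr hsurj
  have h1 : Module.finrank F H ≤ 1 := by
    calc Module.finrank F H = Module.finrank F (⊤ : Submodule F H) := finrank_top F H |>.symm
      _ = Module.finrank F (LinearMap.range (Algebra.linearMap F H)) := by rw [htop]
      _ ≤ Module.finrank F F := LinearMap.finrank_range_le _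
      _ = 1 := Module.finrank_self F
  omega

end Aux

/-- A subset of `H` is a maximal commutative subfield if and only if it is the
carrier of a 2-dimensional `F`-subspace of `H` containing `1`. -/
theorem maximal_subfield_iff_line
    (hcenter : CenterEqF F H) (hdim : Module.finrank F H = 4) (L : Set H) :
    (IsCommSubfield F H L ∧
        ∀ L' : Set H, IsCommSubfield F H L' → L ⊆ L' → L' = L) ↔
      ∃ M : Submodule F H, Module.finrank F M = 2 ∧ (1 : H) ∈ M ∧ (M : Set H) = L := by
  haveI : FiniteDimensional F H := FiniteDimensional.of_finrank_pos (by omega)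
  constructor
  · rintro ⟨hL, hmax⟩
    -- first find x ∈ L not in the range of algebraMap
    have hexL : ∃ x ∈ L, ¬ ∃ a : F, x = algebraMap F H a := by
      by_contra hall
      push_neg at hall
      obtain ⟨x0, hx0⟩ := qsf_exists_not_range (F := F) (H := H) hdim
      obtain ⟨hsf, hmaxspan⟩ := qsf_span_isCommSubfield hcenter hdim hx0
      have hsub : L ⊆ (Submodule.span F ({1, x0} : Set H) : Set H) := by
        intro z hz
        obtain ⟨a, ha⟩ := hall z hz
        rw [ha, Algebra.algebraMap_eq_smul_one]
        exact Submodule.smul_mem _ a (Submodule.subset_span (by simp))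
      have heq := hmax _ hsf hsub
      have hx0L : x0 ∈ L := by
        rw [← heq]
        exact Submodule.subset_span (by simp)
      obtain ⟨a, ha⟩ := hall x0 hx0L
      exact hx0 ⟨a, ha⟩
    obtain ⟨x, hxL, hx⟩ := hexL
    obtain ⟨hsf, hmaxspan⟩ := qsf_span_isCommSubfield hcenter hdim hx
    have hsub : (Submodule.span F ({1, x} : Set H) : Set H) ⊆ L := by
      intro y hy
      rw [SetLike.mem_coe, Submodule.mem_span_pair] at hy
      obtain ⟨a, b, rfl⟩ := hy
      have h1 : a • (1 : H) ∈ L := by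
        rw [← Algebra.algebraMap_eq_smul_one]; exact hL.1 a
      have h2 : b • x ∈ L := by
        have : b • x = algebraMap F H b * x := by
          rw [Algebra.algebraMap_eq_smul_one, smul_mul_assoc, one_mul]
        rw [this]
        exact hL.2.2.2.1 _ (hL.1 b) _ hxL
      exact hL.2.1 _ h1 _ h2
    -- L is a comm subfield containing the span, so by maximality of span... use the other dir:
    have hLsub : L ⊆ (Submodule.span F ({1, x} : Set H) : Set H) := by
      have := hmaxspan L hL hsub
      rw [this]
    have heq : (Submodule.span F ({1, x} : Set H) : Set H) = L :=
      Set.Subset.antisymm hsub hLsub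
    exact ⟨Submodule.span F ({1, x} : Set H), qsf_finrank_span_pair hx,
      Submodule.subset_span (by simp), heq⟩
  · rintro ⟨M, hM2, h1M, rfl⟩
    -- find x ∈ M not in range
    have hexM : ∃ x, x ∈ M ∧ ¬ ∃ a : F, x = algebraMap F H a := by
      by_contra hall
      push_neg at hall
      have hle : M ≤ LinearMap.range (Algebra.linearMap F H) := by
        intro y hy
        obtain ⟨a, ha⟩ := hall y hy
        exact ⟨a, ha.symm⟩
      have := Submodule.finrank_mono hle
      have hr : Module.finrank F (LinearMap.range (Algebra.linearMap F H)) ≤ 1 :=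
        (LinearMap.finrank_range_le _).trans (le_of_eq (Module.finrank_self F))
      omega
    obtain ⟨x, hxM, hx⟩ := hexM
    have hspan2 := qsf_finrank_span_pair (F := F) hx
    have hle : Submodule.span F ({1, x} : Set H) ≤ M := by
      rw [Submodule.span_le]
      rintro y (rfl | rfl) <;> assumption
    have heq : Submodule.span F ({1, x} : Set H) = M :=
      Submodule.eq_of_le_of_finrank_eq hle (by rw [hspan2, hM2])
    obtain ⟨hsf, hmaxspan⟩ := qsf_span_isCommSubfield hcenter hdim hx
    rw [← heq]
    exact ⟨hsf, hmaxspan⟩
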